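/- arXiv:1705.01091 — 5 statements merged into one kernel-verified Lean document; each statement's English description precedes it below -/
import Mathlib

section
/- (Verification theorem / Theorem 1.) Let l : A × B → [0,1] satisfy the Blackwell condition: for all γ ∈ ℝ^N₊ and f ∈ A^N the set Γ(γ,f) = {p ∈ Δ : ⟨γ, r(p,f,b)⟩ ≤ 0 for all b ∈ B} is nonempty, where r^i(p,f,b) = l(⟨p,f⟩,b) − l(f^i,b). Let Φ : ℝ^N → ℝ be twice continuously differentiable, nondecreasing in each coordinate, with Φ(x) ≥ max{x₁,…,x_N} for all x and (1/2)⟨Φ_xx(x)h,h⟩ ≤ c for all x and all h with |hᵢ| ≤ 1. Define the strategy p*_t ∈ Γ(Φ_x(X*_t), f_t) and the state process X*₀ = 0, X*_{t+1} = X*_t + r(p*_t, f_t, b_t)/√n. Then for any sequences (f_t)_{t=0}^{n−1} in A^N and (b_t)_{t=0}^{n−1} in B, the regret R_n = Σ_{t=0}^{n−1} l(⟨p*_t,f_t⟩, b_t) − min_{1≤i≤N} Σ_{t=0}^{n−1} l(f^i_t, b_t) satisfies R_n ≤ (c + Φ(0))·√n. -/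
open Set

lemma taylor_key {N : ℕ} (Φ : (Fin N → ℝ) → ℝ) (hΦ : ContDiff ℝ 2 Φ)
    (x h : Fin N → ℝ) (C : ℝ)
    (hC : ∀ y : Fin N → ℝ, fderiv ℝ (fderiv ℝ Φ) y h h ≤ 2 * C) :
    Φ (x + h) ≤ Φ x + fderiv ℝ Φ x h + C := by
  set L : ℝ → (Fin N → ℝ) := fun s => x + s • h with hL
  have hLd : ∀ s : ℝ, HasDerivAt L h s := fun s => by
    have h' := ((hasDerivAt_id s).smul_const h).const_add x; rw [one_smul] at h'; exact h'
  have hΦd : Differentiable ℝ Φ := hΦ.differentiable (by norm_num)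
  have hΦ' : ContDiff ℝ 1 (fderiv ℝ Φ) := hΦ.fderiv_right (le_refl _)
  set G : ℝ → ℝ := fun s => fderiv ℝ Φ (L s) h with hG
  have hgd : ∀ s : ℝ, HasDerivAt (fun u => Φ (L u)) (G s) s := fun s =>
    ((hΦd (L s)).hasFDerivAt).comp_hasDerivAt s (hLd s)
  have hGd : ∀ s : ℝ, HasDerivAt G (fderiv ℝ (fderiv ℝ Φ) (L s) h h) s := by
    intro s
    have h1 : HasDerivAt (fun u => fderiv ℝ Φ (L u)) (fderiv ℝ (fderiv ℝ Φ) (L s) h) s :=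
      ((hΦ'.differentiable one_ne_zero (L s)).hasFDerivAt).comp_hasDerivAt s (hLd s)
    simpa using h1.clm_apply (hasDerivAt_const s h)
  -- Step 1: G s ≤ G 0 + 2C s for s ≥ 0
  have step1 : ∀ s : ℝ, 0 ≤ s → G s ≤ G 0 + 2 * C * s := by
    intro s hs
    set F : ℝ → ℝ := fun u => 2 * C * u - G u with hF
    have hFd : ∀ u : ℝ, HasDerivAt F (2 * C - fderiv ℝ (fderiv ℝ Φ) (L u) h h) u :=
      fun u => by have h := (((hasDerivAt_id u).const_mul (2*C)).sub (hGd u)); rw [mul_one] at h; exact h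
    have hmonoF : Monotone F := by
      apply monotone_of_deriv_nonneg (fun u => (hFd u).differentiableAt)
      intro u
      rw [(hFd u).deriv]
      linarith [hC (L u)]
    have := hmonoF hs
    simp only [hF, mul_zero, zero_sub] at this
    linarith
  -- Step 2
  set H : ℝ → ℝ := fun u => Φ x + G 0 * u + C * u ^ 2 - Φ (L u) with hH
  have hHd : ∀ u : ℝ, HasDerivAt H (G 0 + 2 * C * u - G u) u := by
    intro u
    have h1 := (((hasDerivAt_id u).const_mul (G 0)).const_add (Φ x)).add
        ((hasDerivAt_pow 2 u).const_mul C)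
    have h2 : HasDerivAt H (G 0 * 1 + C * (((2:ℕ):ℝ) * u ^ (2 - 1)) - G u) u := h1.sub (hgd u)
    convert h2 using 1
    simp
    ring
  have hmonoH : MonotoneOn H (Ici (0:ℝ)) := by
    apply monotoneOn_of_deriv_nonneg (convex_Ici 0)
      (Continuous.continuousOn (by fun_prop))
    · exact fun u _ => (hHd u).differentiableAt.differentiableWithinAt
    · intro u hu
      rw [interior_Ici] at hu
      rw [(hHd u).deriv]
      linarith [step1 u (le_of_lt hu)]
  have h01 := hmonoH (self_mem_Ici) (mem_Ici.mpr zero_le_one) zero_le_one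
  have hG0 : G 0 = fderiv ℝ Φ x h := by simp [hG, hL]
  simp only [hH, hL] at h01
  norm_num at h01
  linarith [h01]
lemma clm_expand {N : ℕ} (T : (Fin N → ℝ) →L[ℝ] ℝ) (v : Fin N → ℝ) :
    T v = ∑ i, v i * T (Pi.single i 1) := by
  have hv : v = ∑ i, v i • (Pi.single i 1 : Fin N → ℝ) := by
    rw [← Finset.univ_sum_single v]
    congr 1; funext i
    ext j
    by_cases h : j = i <;> simp [Pi.single_apply, h]
  conv_lhs => rw [hv]
  rw [map_sum]
  simp [smul_eq_mul]

lemma clm2_scale {N : ℕ} (T : (Fin N → ℝ) →L[ℝ] ((Fin N → ℝ) →L[ℝ] ℝ))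
    (a : ℝ) (v : Fin N → ℝ) : T (a • v) (a • v) = a ^ 2 * T v v := by
  rw [map_smul]
  simp [smul_eq_mul]
  ring


/-- Verification theorem / Theorem 1 of the paper. Under the
Blackwell condition for the loss `l : A × B → [0,1]`, any C² potential `Φ`,
nondecreasing in each coordinate, with `Φ(x) ≥ maxᵢ xᵢ` and Hessian bound
`(1/2)⟨Φ_xx(x)h,h⟩ ≤ c` for `|hᵢ| ≤ 1`, and any strategy `p*_t ∈ Γ(Φ_x(X*_t), f_t)`
with state `X*₀ = 0`, `X*_{t+1} = X*_t + r(p*_t,f_t,b_t)/√n`, produces regret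
`R_n ≤ (c + Φ(0))√n` for all sequences of advice and outcomes. -/
theorem statement_7 {V B : Type*} [AddCommGroup V] [Module ℝ V] {N n : ℕ}
    (hN : 0 < N) (hn : 0 < n)
    (A : Set V) (hA : Convex ℝ A) (l : V → B → ℝ)
    (hl01 : ∀ a ∈ A, ∀ b, l a b ∈ Set.Icc (0 : ℝ) 1)
    -- Blackwell condition for `l`
    (hBlackwell : ∀ γ : Fin N → ℝ, (∀ i, 0 ≤ γ i) →
      ∀ f : Fin N → V, (∀ i, f i ∈ A) →
        ∃ p : Fin N → ℝ, (∀ i, 0 ≤ p i) ∧ (∑ i, p i = 1) ∧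
          ∀ b, ∑ i, γ i * (l (∑ j, p j • f j) b - l (f i) b) ≤ 0)
    -- the potential
    (Φ : (Fin N → ℝ) → ℝ) (c : ℝ) (hc : 0 ≤ c)
    (hΦ : ContDiff ℝ 2 Φ)
    (hmono : ∀ x y : Fin N → ℝ, (∀ i, x i ≤ y i) → Φ x ≤ Φ y)
    (hmax : ∀ (x : Fin N → ℝ) (i : Fin N), x i ≤ Φ x)
    (hhess : ∀ x h : Fin N → ℝ, (∀ i, |h i| ≤ 1) →
      (1 / 2 : ℝ) * fderiv ℝ (fderiv ℝ Φ) x h h ≤ c)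
    -- data of the game and the strategy
    (f : ℕ → Fin N → V) (hf : ∀ t i, f t i ∈ A) (b : ℕ → B)
    (p : ℕ → Fin N → ℝ) (X : ℕ → Fin N → ℝ)
    (hX0 : X 0 = 0)
    (hXrec : ∀ t, t < n → ∀ i, X (t + 1) i =
      X t i + (l (∑ j, p t j • f t j) (b t) - l (f t i) (b t)) / Real.sqrt n)
    (hpΔ : ∀ t, t < n → (∀ i, 0 ≤ p t i) ∧ ∑ i, p t i = 1)
    -- `p*_t ∈ Γ(Φ_x(X*_t), f_t)` : the Blackwell condition along the trajectory
    (hpΓ : ∀ t, t < n → ∀ b' : B,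
      ∑ i, fderiv ℝ Φ (X t) (Pi.single i 1) *
        (l (∑ j, p t j • f t j) b' - l (f t i) b') ≤ 0) :
    (∑ t ∈ Finset.range n, l (∑ j, p t j • f t j) (b t)) -
      (Finset.univ.inf' (Finset.univ_nonempty_iff.mpr (Fin.pos_iff_nonempty.mp hN))
        (fun i => ∑ t ∈ Finset.range n, l (f t i) (b t)))
      ≤ (c + Φ 0) * Real.sqrt n := by
  have hsq : Real.sqrt n > 0 := Real.sqrt_pos.mpr (by exact_mod_cast hn)
  set a : ℝ := (Real.sqrt n)⁻¹ with ha
  have ha0 : 0 ≤ a := le_of_lt (inv_pos.mpr hsq)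
  have ha2 : a ^ 2 = (n : ℝ)⁻¹ := by
    rw [ha, ← Real.sqrt_inv]
    exact Real.sq_sqrt (by positivity)
  -- the regret increments
  set r : ℕ → Fin N → ℝ :=
    fun t i => l (∑ j, p t j • f t j) (b t) - l (f t i) (b t) with hr
  have hrbd : ∀ t, t < n → ∀ i, |r t i| ≤ 1 := by
    intro t ht i
    have hpA : (∑ j, p t j • f t j) ∈ A :=
      hA.sum_mem (fun j _ => (hpΔ t ht).1 j) (hpΔ t ht).2 (fun j _ => hf t j)
    have h1 := hl01 _ hpA (b t)
    have h2 := hl01 _ (hf t i) (b t)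
    have hre : r t i = l (∑ j, p t j • f t j) (b t) - l (f t i) (b t) := rfl
    rw [hre, abs_le]
    simp only [Set.mem_Icc] at h1 h2
    constructor <;> linarith
  -- one-step estimate
  have hstep : ∀ t, t < n → Φ (X (t + 1)) ≤ Φ (X t) + c / n := by
    intro t ht
    have hXsucc : X (t + 1) = X t + a • r t := by
      funext i
      rw [hXrec t ht i]
      simp [ha, hr, div_eq_inv_mul, mul_comm]
    have hC : ∀ y : Fin N → ℝ,
        fderiv ℝ (fderiv ℝ Φ) y (a • r t) (a • r t) ≤ 2 * (c / n) := by
      intro y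
      rw [clm2_scale, ha2]
      have hq := hhess y (r t) (hrbd t ht)
      have hn' : (0:ℝ) < n := by exact_mod_cast hn
      rw [div_eq_mul_inv c]
      calc (n:ℝ)⁻¹ * fderiv ℝ (fderiv ℝ Φ) y (r t) (r t)
          ≤ (n:ℝ)⁻¹ * (2 * c) := by
            apply mul_le_mul_of_nonneg_left (by linarith) (by positivity)
        _ = 2 * (c * (n:ℝ)⁻¹) := by ring
    have hlin : fderiv ℝ Φ (X t) (a • r t) ≤ 0 := by
      have := hpΓ t ht (b t)
      have hexp : fderiv ℝ Φ (X t) (a • r t)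
          = a * ∑ i, fderiv ℝ Φ (X t) (Pi.single i 1) * r t i := by
        rw [map_smul, smul_eq_mul]
        congr 1
        rw [clm_expand (fderiv ℝ Φ (X t)) (r t)]
        exact Finset.sum_congr rfl (fun i _ => mul_comm _ _)
      rw [hexp]
      exact mul_nonpos_of_nonneg_of_nonpos ha0 this
    have := taylor_key Φ hΦ (X t) (a • r t) (c / n) hC
    rw [hXsucc]
    linarith
  -- cumulative estimate
  have hcum : ∀ t, t ≤ n → Φ (X t) ≤ Φ 0 + t * (c / n) := by
    intro t
    induction t with
    | zero => intro _; simp [hX0]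
    | succ t ih =>
      intro ht
      have ht' : t < n := Nat.lt_of_succ_le ht
      have := hstep t ht'
      have := ih (le_of_lt ht')
      push_cast
      linarith
  have hΦn : Φ (X n) ≤ Φ 0 + c := by
    have := hcum n le_rfl
    have hn' : (n:ℝ) ≠ 0 := by positivity
    rw [mul_div_cancel₀ c hn'] at this
    exact this
  -- explicit formula for X
  have hXform : ∀ t, t ≤ n → ∀ i, X t i = (∑ s ∈ Finset.range t, r s i) / Real.sqrt n := by
    intro t
    induction t with
    | zero => intro _ i; simp [hX0]
    | succ t ih =>
      intro ht i
      have ht' : t < n := Nat.lt_of_succ_le ht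
      rw [hXrec t ht' i, ih (le_of_lt ht') i, Finset.sum_range_succ, add_div]
  -- conclusion
  obtain ⟨i₀, _, hi₀⟩ := Finset.exists_mem_eq_inf' (α := ℝ)
    (Finset.univ_nonempty_iff.mpr (Fin.pos_iff_nonempty.mp hN))
    (fun i => ∑ t ∈ Finset.range n, l (f t i) (b t))
  rw [hi₀]
  have hsum : (∑ t ∈ Finset.range n, l (∑ j, p t j • f t j) (b t)) -
      (∑ t ∈ Finset.range n, l (f t i₀) (b t)) = ∑ s ∈ Finset.range n, r s i₀ := by
    rw [← Finset.sum_sub_distrib]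
  rw [hsum]
  have hXn := hXform n le_rfl i₀
  have hbound : X n i₀ ≤ c + Φ 0 := by
    have := hmax (X n) i₀
    linarith
  have : (∑ s ∈ Finset.range n, r s i₀) = X n i₀ * Real.sqrt n := by
    rw [hXn]; field_simp
  rw [this]
  exact mul_le_mul_of_nonneg_right hbound (le_of_lt hsq)
end

section
/- With the exponential potential Φ(x) = η⁻¹ ln(Σᵢ e^{η xᵢ}), the bound of the verification theorem is R_n/√n ≤ η/2 + (ln N)/η, and the choice η = √(2 ln N) yields R_n ≤ √(2 n ln N). -/
private theorem exp_neg_le_aux (x : ℝ) (hx : 0 ≤ x) : Real.exp (-x) ≤ 1 - x + x^2/2 := by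
  have h1 : 1 + x + x^2/2 ≤ Real.exp x := by
    have h := Real.sum_le_exp_of_nonneg hx 3
    simp [Finset.sum_range_succ] at h
    nlinarith [h]
  have h2 : Real.exp (-x) * (1 + x + x^2/2) ≤ 1 := by
    have := mul_le_mul_of_nonneg_left h1 (Real.exp_pos (-x)).le
    rwa [← Real.exp_add, neg_add_cancel, Real.exp_zero] at this
  nlinarith [Real.exp_pos (-x), sq_nonneg x, sq_nonneg (x^2)]

/-- For the exponentially weighted average forecaster (exponential
potential `Φ(x) = η⁻¹ ln ∑ e^{η xᵢ}`), the regret bound of the verification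
theorem reads `R_n/√n ≤ η/2 + (ln N)/η`, and the choice `η = √(2 ln N)` yields
`R_n ≤ √(2 n ln N)`. -/
theorem statement_8 {V B : Type*} [AddCommGroup V] [Module ℝ V] {N n : ℕ}
    (hN : 2 ≤ N) (hn : 0 < n)
    (A : Set V) (hA : Convex ℝ A) (l : V → B → ℝ)
    (hl01 : ∀ a ∈ A, ∀ b, l a b ∈ Set.Icc (0 : ℝ) 1)
    (hconv : ∀ b, ConvexOn ℝ A (fun a => l a b))
    (η : ℝ) (hη : 0 < η)
    (f : ℕ → Fin N → V) (hf : ∀ t i, f t i ∈ A) (b : ℕ → B)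
    (L : ℕ → Fin N → ℝ) (hL : ∀ t i, L t i = ∑ s ∈ Finset.range t, l (f s i) (b s))
    (p : ℕ → Fin N → ℝ)
    (hp : ∀ t i, p t i = Real.exp (-η * L t i / Real.sqrt n) /
      ∑ j, Real.exp (-η * L t j / Real.sqrt n)) :
    ((∑ t ∈ Finset.range n, l (∑ j, p t j • f t j) (b t)) -
        (Finset.univ.inf'
          (Finset.univ_nonempty_iff.mpr (Fin.pos_iff_nonempty.mp (by omega)))
          (fun i => ∑ t ∈ Finset.range n, l (f t i) (b t)))
      ≤ (η / 2 + Real.log N / η) * Real.sqrt n) ∧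
    (η = Real.sqrt (2 * Real.log N) →
      (∑ t ∈ Finset.range n, l (∑ j, p t j • f t j) (b t)) -
        (Finset.univ.inf'
          (Finset.univ_nonempty_iff.mpr (Fin.pos_iff_nonempty.mp (by omega)))
          (fun i => ∑ t ∈ Finset.range n, l (f t i) (b t)))
      ≤ Real.sqrt (2 * n * Real.log N)) := by
  have hNpos : 0 < N := by omega
  have hn' : (0:ℝ) < Real.sqrt n := Real.sqrt_pos.mpr (by exact_mod_cast hn)
  have hs : Real.sqrt n * Real.sqrt n = (n:ℝ) := Real.mul_self_sqrt (by positivity)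
  obtain ⟨c, hc⟩ : ∃ c : ℝ, c = η / Real.sqrt n := ⟨_, rfl⟩
  have hcpos : 0 < c := hc ▸ div_pos hη hn'
  obtain ⟨ℓ, hℓ⟩ : ∃ ℓ : ℕ → Fin N → ℝ, ℓ = fun t i => l (f t i) (b t) := ⟨_, rfl⟩
  have hℓt : ∀ t i, ℓ t i = l (f t i) (b t) := fun t i => by simp only [hℓ]
  have hℓ0 : ∀ t i, 0 ≤ ℓ t i := fun t i => (hℓt t i) ▸ (hl01 _ (hf t i) (b t)).1
  have hℓ1 : ∀ t i, ℓ t i ≤ 1 := fun t i => (hℓt t i) ▸ (hl01 _ (hf t i) (b t)).2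
  obtain ⟨W, hW⟩ : ∃ W : ℕ → ℝ, W = fun t => ∑ j, Real.exp (-(c * L t j)) := ⟨_, rfl⟩
  have hWt : ∀ t, W t = ∑ j, Real.exp (-(c * L t j)) := fun t => by simp only [hW]
  have hWpos : ∀ t, 0 < W t := by
    intro t; rw [hWt]
    exact Finset.sum_pos (fun j _ => Real.exp_pos _) ⟨⟨0, hNpos⟩, Finset.mem_univ _⟩
  have hp' : ∀ t i, p t i = Real.exp (-(c * L t i)) / W t := by
    intro t i
    rw [hp, hWt]
    congr 1
    · congr 1; rw [hc]; ring
    · refine Finset.sum_congr rfl fun j _ => ?_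
      congr 1; rw [hc]; ring
  have hpnn : ∀ t i, 0 ≤ p t i := by
    intro t i; rw [hp' t i]
    exact div_nonneg (Real.exp_pos _).le (hWpos t).le
  have hpsum : ∀ t, ∑ j, p t j = 1 := by
    intro t
    have h : ∑ j, p t j = (∑ j, Real.exp (-(c * L t j))) / W t := by
      rw [Finset.sum_div]
      exact Finset.sum_congr rfl fun j _ => hp' t j
    rw [h, ← hWt]
    exact div_self (hWpos t).ne'
  obtain ⟨M, hM⟩ : ∃ M : ℕ → ℝ, M = fun t => ∑ j, p t j * ℓ t j := ⟨_, rfl⟩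
  have hMt : ∀ t, M t = ∑ j, p t j * ℓ t j := fun t => by simp only [hM]
  have hJensen : ∀ t, l (∑ j, p t j • f t j) (b t) ≤ M t := by
    intro t
    rw [hMt]
    simp only [hℓt]
    exact (hconv (b t)).map_sum_le (fun i _ => hpnn t i) (hpsum t) (fun i _ => hf t i)
  have hstep : ∀ t, W (t+1) ≤ W t * Real.exp (c^2/2 - c * M t) := by
    intro t
    have hLrec : ∀ i, L (t+1) i = L t i + ℓ t i := by
      intro i; rw [hL, hL, Finset.sum_range_succ, hℓt]
    have h1 : W (t+1) = W t * ∑ j, p t j * Real.exp (-(c * ℓ t j)) := by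
      rw [hWt, Finset.mul_sum]
      refine Finset.sum_congr rfl fun j _ => ?_
      have hcan : W t * (Real.exp (-(c * L t j)) / W t * Real.exp (-(c * ℓ t j)))
          = Real.exp (-(c * L t j)) * Real.exp (-(c * ℓ t j)) := by
        field_simp
        exact div_self (hWpos t).ne'
      rw [hLrec, hp', hcan, ← Real.exp_add]
      congr 1; ring
    have h2 : ∑ j, p t j * Real.exp (-(c * ℓ t j)) ≤ 1 + (c^2/2 - c * M t) := by
      have hb : ∀ j : Fin N, p t j * Real.exp (-(c * ℓ t j)) ≤
          p t j * (1 - c * ℓ t j + c^2/2) := by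
        intro j
        refine mul_le_mul_of_nonneg_left ?_ (hpnn t j)
        have he := exp_neg_le_aux (c * ℓ t j) (mul_nonneg hcpos.le (hℓ0 t j))
        have hsq : (c * ℓ t j)^2 ≤ c^2 := by
          have h1 := hℓ0 t j; have h2 := hℓ1 t j
          have hl2 : ℓ t j ^ 2 ≤ 1 := by nlinarith
          calc (c * ℓ t j)^2 = c^2 * ℓ t j ^ 2 := by ring
            _ ≤ c^2 * 1 := by nlinarith [sq_nonneg c]
            _ = c^2 := by ring
        nlinarith
      calc ∑ j, p t j * Real.exp (-(c * ℓ t j))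
          ≤ ∑ j, p t j * (1 - c * ℓ t j + c^2/2) := Finset.sum_le_sum (fun j _ => hb j)
        _ = 1 + (c^2/2 - c * M t) := by
            have : ∀ j : Fin N, p t j * (1 - c * ℓ t j + c^2/2)
                = p t j * (1 + c^2/2) - c * (p t j * ℓ t j) := by intro j; ring
            simp only [this]
            rw [Finset.sum_sub_distrib, ← Finset.sum_mul, hpsum t, ← Finset.mul_sum, ← hMt]
            ring
    have h3 : (1 : ℝ) + (c^2/2 - c * M t) ≤ Real.exp (c^2/2 - c * M t) := by
      have := Real.add_one_le_exp (c^2/2 - c * M t); linarith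
    calc W (t+1) = W t * ∑ j, p t j * Real.exp (-(c * ℓ t j)) := h1
      _ ≤ W t * Real.exp (c^2/2 - c * M t) :=
          mul_le_mul_of_nonneg_left (le_trans h2 h3) (hWpos t).le
  have hlog : ∀ m, Real.log (W m) ≤ Real.log (W 0) + ∑ t ∈ Finset.range m, (c^2/2 - c * M t) := by
    intro m
    induction m with
    | zero => simp
    | succ k ih =>
      have h1 : Real.log (W (k+1)) ≤ Real.log (W k) + (c^2/2 - c * M k) := by
        have := Real.log_le_log (hWpos (k+1)) (hstep k)
        rwa [Real.log_mul (hWpos k).ne' (Real.exp_ne_zero _), Real.log_exp] at this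
      rw [Finset.sum_range_succ]
      linarith
  have hW0 : Real.log (W 0) = Real.log N := by
    have hz : W 0 = N := by
      rw [hWt]
      have hz' : ∀ j : Fin N, L 0 j = 0 := by intro j; rw [hL]; simp
      simp [hz']
    rw [hz]
  obtain ⟨i, -, hi⟩ := Finset.exists_mem_eq_inf'
    (Finset.univ_nonempty_iff.mpr (Fin.pos_iff_nonempty.mp (by omega : 0 < N)))
    (fun i => ∑ t ∈ Finset.range n, l (f t i) (b t))
  have hlow : -(c * L n i) ≤ Real.log (W n) := by
    rw [Real.le_log_iff_exp_le (hWpos n), hWt]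
    exact Finset.single_le_sum (f := fun j => Real.exp (-(c * L n j)))
      (fun j _ => (Real.exp_pos _).le) (Finset.mem_univ i)
  have hkey : (∑ t ∈ Finset.range n, M t) - L n i ≤ Real.log N / c + n * c / 2 := by
    have h1 := hlow.trans (hlog n)
    rw [hW0, Finset.sum_sub_distrib, Finset.sum_const, Finset.card_range,
      ← Finset.mul_sum, nsmul_eq_mul] at h1
    have h2 : c * ((∑ t ∈ Finset.range n, M t) - L n i) ≤ Real.log N + n * (c^2/2) := by
      linarith
    rw [← sub_nonneg]
    have h3 : Real.log N / c + n * c / 2 - ((∑ t ∈ Finset.range n, M t) - L n i)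
        = (Real.log N + n * (c^2/2) - c * ((∑ t ∈ Finset.range n, M t) - L n i)) / c := by
      field_simp
    rw [h3]
    exact div_nonneg (by linarith) hcpos.le
  have hsumJ : (∑ t ∈ Finset.range n, l (∑ j, p t j • f t j) (b t)) ≤
      ∑ t ∈ Finset.range n, M t :=
    Finset.sum_le_sum (fun t _ => hJensen t)
  have hinf : (Finset.univ.inf'
      (Finset.univ_nonempty_iff.mpr (Fin.pos_iff_nonempty.mp (by omega : 0 < N)))
      (fun i => ∑ t ∈ Finset.range n, l (f t i) (b t))) = L n i := by
    rw [hi, hL]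
  have hEq : Real.log N / c + n * c / 2 = (η / 2 + Real.log N / η) * Real.sqrt n := by
    rw [hc]
    field_simp
    ring_nf
    linear_combination (-η^2) * hs
  have hmain : (∑ t ∈ Finset.range n, l (∑ j, p t j • f t j) (b t)) -
      (Finset.univ.inf'
        (Finset.univ_nonempty_iff.mpr (Fin.pos_iff_nonempty.mp (by omega : 0 < N)))
        (fun i => ∑ t ∈ Finset.range n, l (f t i) (b t)))
      ≤ (η / 2 + Real.log N / η) * Real.sqrt n := by
    rw [hinf, ← hEq]
    linarith
  refine ⟨hmain, fun hηeq => ?_⟩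
  have hlogN : 0 < Real.log N := Real.log_pos (by exact_mod_cast hN.trans_lt' one_lt_two)
  have hη2 : η * η = 2 * Real.log N := by
    rw [hηeq, Real.mul_self_sqrt (by positivity)]
  have hcoef : η / 2 + Real.log N / η = η := by
    field_simp
    linarith [hη2]
  have hrhs : (η / 2 + Real.log N / η) * Real.sqrt n = Real.sqrt (2 * n * Real.log N) := by
    rw [hcoef, hηeq, ← Real.sqrt_mul (by positivity)]
    congr 1
    ring
  rw [← hrhs]
  exact hmain
end

section
/- Blackwell condition for the chosen strategy: if l is convex in its first argument and Φ : ℝ^N → ℝ is differentiable with Φ_x(x) ≥ 0 (componentwise) and Φ_x(x) ≠ 0, then the weighted average forecast p*(x,f) = Φ_x(x)/⟨Φ_x(x),1⟩ satisfies ⟨Φ_x(x), r(p*(x,f), f, b)⟩ ≤ 0 for all f ∈ A^N and b ∈ B. -/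
/-- Blackwell condition for the weighted average forecaster.
If `l` is convex in its first argument and `Φ` is differentiable with
componentwise nonnegative, nonzero gradient at `x`, then
`p*(x,f) = Φ_x(x)/⟨Φ_x(x),1⟩` satisfies `⟨Φ_x(x), r(p*(x,f),f,b)⟩ ≤ 0`
for all `f ∈ Aᴺ` and `b ∈ B`. -/
theorem statement_15 {V B : Type*} [AddCommGroup V] [Module ℝ V] {N : ℕ}
    (hN : 0 < N) (A : Set V) (hA : Convex ℝ A) (l : V → B → ℝ)
    (hl01 : ∀ a ∈ A, ∀ b, l a b ∈ Set.Icc (0 : ℝ) 1)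
    (hconv : ∀ b, ConvexOn ℝ A (fun a => l a b))
    (Φ : (Fin N → ℝ) → ℝ) (x : Fin N → ℝ) (hdiff : DifferentiableAt ℝ Φ x)
    (hgrad0 : ∀ i, 0 ≤ fderiv ℝ Φ x (Pi.single i 1))
    (hgradne : ∃ i, fderiv ℝ Φ x (Pi.single i 1) ≠ 0) :
    ∀ (f : Fin N → V), (∀ i, f i ∈ A) → ∀ b : B,
      ∑ i, fderiv ℝ Φ x (Pi.single i 1) *
        (l (∑ j, (fderiv ℝ Φ x (Pi.single j 1) /
            ∑ k, fderiv ℝ Φ x (Pi.single k 1)) • f j) b - l (f i) b) ≤ 0 := by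
  intro f hf b
  set w : Fin N → ℝ := fun i => fderiv ℝ Φ x (Pi.single i 1) with hw
  set S : ℝ := ∑ k, w k with hS
  obtain ⟨i0, hi0⟩ := hgradne
  have hSpos : 0 < S := by
    have : 0 < w i0 := lt_of_le_of_ne (hgrad0 i0) (Ne.symm hi0)
    exact Finset.sum_pos' (fun i _ => hgrad0 i) ⟨i0, Finset.mem_univ i0, this⟩
  have h1 : ∑ i, w i / S = 1 := by
    rw [← Finset.sum_div]; field_simp; exact hS.symm
  have hjensen := (hconv b).map_sum_le (t := Finset.univ) (w := fun i => w i / S)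
    (p := f) (fun i _ => div_nonneg (hgrad0 i) hSpos.le) h1 (fun i _ => hf i)
  calc ∑ i, w i * (l (∑ j, (w j / S) • f j) b - l (f i) b)
      = S * (l (∑ j, (w j / S) • f j) b - ∑ i, (w i / S) * l (f i) b) := by
        have hx : ∀ i : Fin N, S * (w i / S * l (f i) b) = w i * l (f i) b := by
          intro i; field_simp
        rw [mul_sub, Finset.mul_sum]
        simp only [hx, mul_sub, Finset.sum_sub_distrib, ← Finset.sum_mul]
        rw [← hS]
    _ ≤ 0 := by
        have := sub_nonpos.2 hjensen
        exact mul_nonpos_of_nonneg_of_nonpos hSpos.le this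
end

section
/- Explicit regret bound for the exponentially weighted average forecaster: let l : A × B → [0,1] be convex in its first argument, η > 0, and define p_t^i = e^{−η L_t^i/√n} / Σⱼ e^{−η L_t^j/√n} where L_t^i = Σ_{s=0}^{t−1} l(f_s^i, b_s). Then for all sequences (f_t) in A^N and (b_t) in B, Σ_{t=0}^{n−1} l(⟨p_t,f_t⟩, b_t) − min_i Σ_{t=0}^{n−1} l(f_t^i, b_t) ≤ (η/2 + (ln N)/η)√n. -/
lemma exp_neg_le_quad {x : ℝ} (hx : 0 ≤ x) :
    Real.exp (-x) ≤ 1 - x + x ^ 2 / 2 := by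
  have h : ∀ y : ℝ, HasDerivAt (fun t => 1 - t + t ^ 2 / 2 - Real.exp (-t))
      (-1 + y + Real.exp (-y)) y := by
    intro y
    have h1 : HasDerivAt (fun t : ℝ => Real.exp (-t)) (-Real.exp (-y)) y := by
      exact ((Real.hasDerivAt_exp (-y)).comp y ((hasDerivAt_id y).neg)).congr_deriv (by simp)
    have h2 : HasDerivAt (fun t : ℝ => 1 - t + t ^ 2 / 2) (-1 + y) y := by
      have := ((hasDerivAt_id y).const_sub 1).add ((hasDerivAt_pow 2 y).div_const 2)
      exact this.congr_deriv (by norm_num)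
    exact (h2.sub h1).congr_deriv (by ring)
  have mono : MonotoneOn (fun t => 1 - t + t ^ 2 / 2 - Real.exp (-t)) (Set.Ici 0) := by
    apply monotoneOn_of_deriv_nonneg (convex_Ici 0)
    · exact Continuous.continuousOn (by continuity)
    · intro y hy
      exact (h y).differentiableAt.differentiableWithinAt
    · intro y hy
      rw [(h y).deriv]
      have := Real.add_one_le_exp (-y)
      linarith
  have h0 := mono Set.self_mem_Ici (Set.mem_Ici.mpr hx) hx
  simp at h0
  linarith

/-- Explicit regret bound for the exponentially weighted average
forecaster: with `l : A × B → [0,1]` convex in its first argument, `η > 0` and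
weights `p_tⁱ = e^{−η L_tⁱ/√n}/∑ⱼ e^{−η L_tʲ/√n}`, `L_tⁱ = ∑_{s<t} l(f_sⁱ,b_s)`,
the regret satisfies `R_n ≤ (η/2 + (ln N)/η)√n`. -/
theorem statement_16 {V B : Type*} [AddCommGroup V] [Module ℝ V] {N n : ℕ}
    (hN : 0 < N) (hn : 0 < n)
    (A : Set V) (hA : Convex ℝ A) (l : V → B → ℝ)
    (hl01 : ∀ a ∈ A, ∀ b, l a b ∈ Set.Icc (0 : ℝ) 1)
    (hconv : ∀ b, ConvexOn ℝ A (fun a => l a b))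
    (η : ℝ) (hη : 0 < η)
    (f : ℕ → Fin N → V) (hf : ∀ t i, f t i ∈ A) (b : ℕ → B)
    (L : ℕ → Fin N → ℝ) (hL : ∀ t i, L t i = ∑ s ∈ Finset.range t, l (f s i) (b s))
    (p : ℕ → Fin N → ℝ)
    (hp : ∀ t i, p t i = Real.exp (-η * L t i / Real.sqrt n) /
      ∑ j, Real.exp (-η * L t j / Real.sqrt n)) :
    (∑ t ∈ Finset.range n, l (∑ j, p t j • f t j) (b t)) -
      (Finset.univ.inf' (Finset.univ_nonempty_iff.mpr (Fin.pos_iff_nonempty.mp hN))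
        (fun i => ∑ t ∈ Finset.range n, l (f t i) (b t)))
      ≤ (η / 2 + Real.log N / η) * Real.sqrt n := by
  have hne : (Finset.univ : Finset (Fin N)).Nonempty :=
    Finset.univ_nonempty_iff.mpr (Fin.pos_iff_nonempty.mp hN)
  set s := Real.sqrt n with hs_def
  have hs : 0 < s := Real.sqrt_pos.mpr (by positivity)
  have hss : s * s = (n : ℝ) := Real.mul_self_sqrt (by positivity)
  set c := η / s with hc_def
  have hc : 0 < c := div_pos hη hs
  set ℓ : ℕ → Fin N → ℝ := fun t i => l (f t i) (b t) with hℓ_def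
  have hℓ0 : ∀ t i, 0 ≤ ℓ t i := fun t i => (hl01 _ (hf t i) (b t)).1
  have hℓ1 : ∀ t i, ℓ t i ≤ 1 := fun t i => (hl01 _ (hf t i) (b t)).2
  set W : ℕ → ℝ := fun t => ∑ i, Real.exp (-(c * L t i)) with hW_def
  have hWpos : ∀ t, 0 < W t := fun t =>
    Finset.sum_pos (fun i _ => Real.exp_pos _) hne
  have harg : ∀ t j, -η * L t j / s = -(c * L t j) := by
    intro t j; rw [hc_def]; ring
  have hp' : ∀ t i, p t i = Real.exp (-(c * L t i)) / W t := by
    intro t i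
    rw [hp t i]
    simp only [harg]
    rfl
  have hp0 : ∀ t i, 0 ≤ p t i := by
    intro t i; rw [hp' t i]; positivity
  have hpsum : ∀ t, ∑ i, p t i = 1 := by
    intro t
    simp only [hp']
    rw [← Finset.sum_div, div_self (hWpos t).ne']
  -- per-round expected loss
  set S : ℕ → ℝ := fun t => ∑ i, p t i * ℓ t i with hS_def
  -- Jensen
  have hJensen : ∀ t, l (∑ j, p t j • f t j) (b t) ≤ S t := by
    intro t
    exact (hconv (b t)).map_sum_le (fun i _ => hp0 t i) (hpsum t) (fun i _ => hf t i)
  -- recurrence for W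
  have hrec : ∀ t, W (t + 1) ≤ W t * Real.exp (-(c * S t) + c ^ 2 / 2) := by
    intro t
    have hstep : ∀ i, L (t + 1) i = L t i + ℓ t i := by
      intro i
      rw [hL, hL, Finset.sum_range_succ]
    have h1 : W (t + 1) = ∑ i, Real.exp (-(c * L t i)) * Real.exp (-(c * ℓ t i)) := by
      simp only [hW_def, hstep, ← Real.exp_add]
      apply Finset.sum_congr rfl
      intro i _
      congr 1; ring
    have h2 : W (t + 1) ≤ ∑ i, Real.exp (-(c * L t i)) * (1 - c * ℓ t i + c ^ 2 / 2) := by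
      rw [h1]
      apply Finset.sum_le_sum
      intro i _
      apply mul_le_mul_of_nonneg_left _ (Real.exp_pos _).le
      have hcx : 0 ≤ c * ℓ t i := mul_nonneg hc.le (hℓ0 t i)
      refine (exp_neg_le_quad hcx).trans ?_
      have : (c * ℓ t i) ^ 2 ≤ c ^ 2 := by
        have h1 : c * ℓ t i ≤ c := by
          nlinarith [hℓ1 t i, hc.le]
        nlinarith
      linarith
    have h3 : ∑ i, Real.exp (-(c * L t i)) * (1 - c * ℓ t i + c ^ 2 / 2)
        = W t * (1 - c * S t + c ^ 2 / 2) := by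
      have hWt : W t = ∑ i, Real.exp (-(c * L t i)) := rfl
      have hWS : W t * S t = ∑ i, Real.exp (-(c * L t i)) * ℓ t i := by
        rw [hS_def, Finset.mul_sum]
        apply Finset.sum_congr rfl
        intro i _
        rw [hp' t i]
        field_simp [(hWpos t).ne']
      calc ∑ i, Real.exp (-(c * L t i)) * (1 - c * ℓ t i + c ^ 2 / 2)
          = (∑ i, Real.exp (-(c * L t i)))
            - c * (∑ i, Real.exp (-(c * L t i)) * ℓ t i)
            + c ^ 2 / 2 * (∑ i, Real.exp (-(c * L t i))) := by
            rw [Finset.mul_sum, Finset.mul_sum, ← Finset.sum_sub_distrib,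
              ← Finset.sum_add_distrib]
            exact Finset.sum_congr rfl fun i _ => by ring
        _ = W t * (1 - c * S t + c ^ 2 / 2) := by
            rw [← hWt, ← hWS]; ring
    have h4 : 1 - c * S t + c ^ 2 / 2 ≤ Real.exp (-(c * S t) + c ^ 2 / 2) := by
      have := Real.add_one_le_exp (-(c * S t) + c ^ 2 / 2)
      linarith
    calc W (t + 1) ≤ W t * (1 - c * S t + c ^ 2 / 2) := h2.trans_eq h3
      _ ≤ W t * Real.exp (-(c * S t) + c ^ 2 / 2) :=
        mul_le_mul_of_nonneg_left h4 (hWpos t).le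
  -- iterate
  have hiter : ∀ m, W m ≤ W 0 * Real.exp (∑ t ∈ Finset.range m, (-(c * S t) + c ^ 2 / 2)) := by
    intro m
    induction m with
    | zero => simp
    | succ m ih =>
      calc W (m + 1) ≤ W m * Real.exp (-(c * S m) + c ^ 2 / 2) := hrec m
        _ ≤ (W 0 * Real.exp (∑ t ∈ Finset.range m, (-(c * S t) + c ^ 2 / 2))) *
            Real.exp (-(c * S m) + c ^ 2 / 2) :=
          mul_le_mul_of_nonneg_right ih (Real.exp_pos _).le
        _ = W 0 * Real.exp (∑ t ∈ Finset.range (m + 1), (-(c * S t) + c ^ 2 / 2)) := by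
          conv_rhs => rw [Finset.sum_range_succ, Real.exp_add]
          ring
  have hW0 : W 0 = N := by
    simp [hW_def, hL]
  -- minimizer
  obtain ⟨i₀, -, hi₀⟩ := Finset.exists_mem_eq_inf' hne
    (fun i => ∑ t ∈ Finset.range n, l (f t i) (b t))
  have hLi₀ : L n i₀ = ∑ t ∈ Finset.range n, l (f t i₀) (b t) := hL n i₀
  -- lower bound on W n
  have hlow : Real.exp (-(c * L n i₀)) ≤ W n :=
    Finset.single_le_sum (f := fun i => Real.exp (-(c * L n i)))
      (fun i _ => (Real.exp_pos _).le) (Finset.mem_univ i₀)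
  set T := ∑ t ∈ Finset.range n, S t with hT_def
  have hsum : ∑ t ∈ Finset.range n, (-(c * S t) + c ^ 2 / 2)
      = -(c * T) + n * (c ^ 2 / 2) := by
    rw [Finset.sum_add_distrib, Finset.sum_neg_distrib, ← Finset.mul_sum, ← hT_def]
    simp [mul_comm]
  have hkey : Real.exp (-(c * L n i₀)) ≤ (N : ℝ) * Real.exp (-(c * T) + n * (c ^ 2 / 2)) := by
    calc Real.exp (-(c * L n i₀)) ≤ W n := hlow
      _ ≤ W 0 * Real.exp (∑ t ∈ Finset.range n, (-(c * S t) + c ^ 2 / 2)) := hiter n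
      _ = (N : ℝ) * Real.exp (-(c * T) + n * (c ^ 2 / 2)) := by rw [hW0, hsum]
  -- take log
  have hNpos : (0 : ℝ) < N := by positivity
  have hlog : -(c * L n i₀) ≤ Real.log N + (-(c * T) + n * (c ^ 2 / 2)) := by
    have := Real.log_le_log (Real.exp_pos _) hkey
    rwa [Real.log_exp, Real.log_mul hNpos.ne' (Real.exp_pos _).ne', Real.log_exp] at this
  have hTL : T - L n i₀ ≤ Real.log N / c + n * c / 2 := by
    rw [div_add_div _ _ hc.ne' two_ne_zero, le_div_iff₀ (by positivity)]
    nlinarith [hlog, hc]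
  -- final computation
  have hfin : Real.log N / c + n * c / 2 = (η / 2 + Real.log N / η) * s := by
    rw [hc_def]
    field_simp
    linear_combination (-η ^ 2) * hss
  rw [hi₀]
  have hsum2 : ∑ t ∈ Finset.range n, l (∑ j, p t j • f t j) (b t) ≤ T := by
    rw [hT_def]
    exact Finset.sum_le_sum fun t _ => hJensen t
  calc (∑ t ∈ Finset.range n, l (∑ j, p t j • f t j) (b t)) -
        (∑ t ∈ Finset.range n, l (f t i₀) (b t))
      ≤ T - L n i₀ := by rw [hLi₀]; linarith [hsum2]
    _ ≤ Real.log N / c + n * c / 2 := hTL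
    _ = (η / 2 + Real.log N / η) * s := hfin
end

section
/- One-round potential decrease for the exponential potential: let q ∈ Δ, ℓ ∈ [0,1]^N, and L ∈ [0,1] with L ≤ Σⱼ qⱼ ℓⱼ (e.g. L = l(⟨q,f⟩,b) under convexity). Set rᵢ = L − ℓᵢ and Φ(x) = η⁻¹ ln Σᵢ e^{η xᵢ}. If qᵢ = e^{η xᵢ}/Σₖ e^{η xₖ}, then Φ(x + δ r) ≤ Φ(x) + η δ²/2 for all δ ∈ [0,1]. -/
lemma chord_exp {s lam : ℝ} (hs1 : -1 ≤ s) (hs2 : s ≤ 1) :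
    Real.exp (lam * s) ≤ Real.cosh lam + s * Real.sinh lam := by
  have ha : (0:ℝ) ≤ (1 - s) / 2 := by linarith
  have hb : (0:ℝ) ≤ (1 + s) / 2 := by linarith
  have hab : (1 - s) / 2 + (1 + s) / 2 = 1 := by ring
  have h := convexOn_exp.2 (Set.mem_univ (-lam)) (Set.mem_univ lam) ha hb hab
  simp only [smul_eq_mul] at h
  have h1 : (1 - s) / 2 * (-lam) + (1 + s) / 2 * lam = lam * s := by ring
  rw [h1] at h
  rw [Real.cosh_eq, Real.sinh_eq]
  calc Real.exp (lam * s) ≤ (1 - s) / 2 * Real.exp (-lam) + (1 + s) / 2 * Real.exp lam := h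
    _ = (Real.exp lam + Real.exp (-lam)) / 2 + s * ((Real.exp lam - Real.exp (-lam)) / 2) := by ring

/-- One-round potential decrease for the exponential potential.
With `q` the softmax weights of `x`, `ℓ ∈ [0,1]ᴺ`, `L ∈ [0,1]` with
`L ≤ ∑ⱼ qⱼℓⱼ`, and `rᵢ = L − ℓᵢ`, one has `Φ(x + δr) ≤ Φ(x) + ηδ²/2`
for every `δ ∈ [0,1]`, where `Φ(x) = η⁻¹ ln ∑ᵢ e^{η xᵢ}`. -/
theorem statement_18 {N : ℕ} (hN : 0 < N) (η : ℝ) (hη : 0 < η)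
    (x q ℓ r : Fin N → ℝ) (L : ℝ)
    (hq : ∀ i, q i = Real.exp (η * x i) / ∑ k, Real.exp (η * x k))
    (hℓ : ∀ i, ℓ i ∈ Set.Icc (0 : ℝ) 1) (hL : L ∈ Set.Icc (0 : ℝ) 1)
    (hLq : L ≤ ∑ j, q j * ℓ j)
    (hr : ∀ i, r i = L - ℓ i)
    (δ : ℝ) (hδ0 : 0 ≤ δ) (hδ1 : δ ≤ 1) :
    η⁻¹ * Real.log (∑ j, Real.exp (η * (x + δ • r) j)) ≤
      η⁻¹ * Real.log (∑ j, Real.exp (η * x j)) + η * δ ^ 2 / 2 := by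
  set S := ∑ k, Real.exp (η * x k) with hS
  have hSpos : 0 < S := Finset.sum_pos (fun i _ => Real.exp_pos _)
    (by simpa using Finset.univ_nonempty_iff.2 (Fin.pos_iff_nonempty.mp hN))
  have hηδ : 0 ≤ η * δ := mul_nonneg hη.le hδ0
  -- pointwise bound
  have hpt : ∀ j, Real.exp (η * (x + δ • r) j) ≤
      Real.exp (η * x j) * (Real.cosh (η * δ) + r j * Real.sinh (η * δ)) := by
    intro j
    have hr1 : -1 ≤ r j := by have := (hℓ j); rw [hr j]; simp at this; linarith [hL.1]
    have hr2 : r j ≤ 1 := by have := (hℓ j); rw [hr j]; simp at this; linarith [hL.2]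
    have : η * (x + δ • r) j = η * x j + (η * δ) * r j := by
      simp [Pi.add_apply, Pi.smul_apply, smul_eq_mul]; ring
    rw [this, Real.exp_add]
    exact mul_le_mul_of_nonneg_left (chord_exp hr1 hr2) (Real.exp_pos _).le
  -- sum of q is 1
  have hq1 : ∑ j, q j = 1 := by
    simp only [hq]; rw [← Finset.sum_div]; field_simp; exact hS.symm
  -- Blackwell: ∑ exp(ηx j) * r j ≤ 0
  have hqr : ∑ j, q j * r j ≤ 0 := by
    have : ∑ j, q j * r j = L * (∑ j, q j) - ∑ j, q j * ℓ j := by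
      rw [Finset.mul_sum, ← Finset.sum_sub_distrib]
      exact Finset.sum_congr rfl fun j _ => by rw [hr j]; ring
    rw [this, hq1]; linarith
  have her : ∑ j, Real.exp (η * x j) * r j ≤ 0 := by
    have : ∑ j, Real.exp (η * x j) * r j = S * ∑ j, q j * r j := by
      rw [Finset.mul_sum]
      exact Finset.sum_congr rfl fun j _ => by rw [hq j]; field_simp
    rw [this]
    exact mul_nonpos_of_nonneg_of_nonpos hSpos.le hqr
  -- sum bound
  have hsum : ∑ j, Real.exp (η * (x + δ • r) j) ≤ S * Real.exp ((η * δ) ^ 2 / 2) := by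
    calc ∑ j, Real.exp (η * (x + δ • r) j)
        ≤ ∑ j, Real.exp (η * x j) * (Real.cosh (η * δ) + r j * Real.sinh (η * δ)) :=
          Finset.sum_le_sum fun j _ => hpt j
      _ = S * Real.cosh (η * δ) + Real.sinh (η * δ) * ∑ j, Real.exp (η * x j) * r j := by
          simp only [mul_add, Finset.sum_add_distrib, Finset.mul_sum]
          congr 1
          · rw [hS, Finset.sum_mul]
          · exact Finset.sum_congr rfl fun j _ => by ring
      _ ≤ S * Real.cosh (η * δ) := by
          nlinarith [Real.sinh_nonneg_iff.2 hηδ, her,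
            mul_nonpos_of_nonneg_of_nonpos (Real.sinh_nonneg_iff.2 hηδ) her]
      _ ≤ S * Real.exp ((η * δ) ^ 2 / 2) :=
          mul_le_mul_of_nonneg_left (Real.cosh_le_exp_half_sq _) hSpos.le
  have hpos : 0 < ∑ j, Real.exp (η * (x + δ • r) j) :=
    Finset.sum_pos (fun i _ => Real.exp_pos _)
      (by simpa using Finset.univ_nonempty_iff.2 (Fin.pos_iff_nonempty.mp hN))
  have hlog : Real.log (∑ j, Real.exp (η * (x + δ • r) j)) ≤
      Real.log S + (η * δ) ^ 2 / 2 := by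
    have := Real.log_le_log hpos hsum
    rwa [Real.log_mul hSpos.ne' (Real.exp_pos _).ne', Real.log_exp] at this
  have hkey := mul_le_mul_of_nonneg_left hlog (inv_nonneg.2 hη.le)
  calc η⁻¹ * Real.log (∑ j, Real.exp (η * (x + δ • r) j))
      ≤ η⁻¹ * (Real.log S + (η * δ) ^ 2 / 2) := hkey
    _ = η⁻¹ * Real.log S + η * δ ^ 2 / 2 := by field_simp
end
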